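/- Let I = I(C) be the edge ideal of a clutter C and assume I is not a prime ideal. Then every maximal stable set of C belongs to A_C (i.e., F_C ⊆ A_C), and v(I) = min{ |A| : A ∈ A_C }. -/

import Mathlib

open MvPolynomial

attribute [local instance] Classical.propDecidable

/-- The v-number of a graded ideal `I` of a polynomial ring: the least `d ≥ 1` such that
there is a homogeneous polynomial `f` of degree `d` and an associated prime `p` of `S/I`
with `(I : f) = p`; by convention it is `0` when `I` is the ideal generated by the variables. -/
noncomputable def vNumber {K : Type*} [Field K] {σ : Type*}
    (I : Ideal (MvPolynomial σ K)) : ℕ :=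
  if I = Ideal.span (Set.range (X : σ → MvPolynomial σ K)) then 0
  else sInf {d : ℕ | 1 ≤ d ∧ ∃ f : MvPolynomial σ K, f.IsHomogeneous d ∧
    ∃ p ∈ associatedPrimes (MvPolynomial σ K) (MvPolynomial σ K ⧸ I),
      Submodule.colon I (Ideal.span {f}) = p}

/-- A squarefree monomial ideal: an ideal generated by squarefree monomials,
i.e. by products of distinct variables. -/
def IsSquarefreeMonomialIdeal {K : Type*} [Field K] {σ : Type*}
    (I : Ideal (MvPolynomial σ K)) : Prop :=
  ∃ E : Set (Finset σ), I = Ideal.span ((fun e : Finset σ => ∏ i ∈ e, X i) '' E)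

/-- A clutter on the vertex set `Fin s`: a family of edges, none of which contains another. -/
structure Clutter (s : ℕ) where
  edges : Finset (Finset (Fin s))
  antichain : ∀ e ∈ edges, ∀ f ∈ edges, e ⊆ f → e = f

namespace Clutter

variable {s : ℕ} (C : Clutter s)

/-- The edge ideal of a clutter. -/
noncomputable def edgeIdeal (K : Type*) [Field K] : Ideal (MvPolynomial (Fin s) K) :=
  Ideal.span ((fun e : Finset (Fin s) => ∏ i ∈ e, X i) '' C.edges)

/-- A stable (independent) set of a clutter: a set of vertices containing no edge. -/
def Stable (A : Finset (Fin s)) : Prop := ∀ e ∈ C.edges, ¬ (e ⊆ A)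

/-- A maximal stable set of a clutter. -/
def MaximalStable (A : Finset (Fin s)) : Prop :=
  C.Stable A ∧ ∀ B : Finset (Fin s), C.Stable B → A ⊆ B → A = B

/-- The neighbor set `N_C(A)`: all vertices `i` such that `{i} ∪ A` contains an edge. -/
noncomputable def neighborSet (A : Finset (Fin s)) : Finset (Fin s) :=
  Finset.univ.filter (fun i => ∃ e ∈ C.edges, e ⊆ insert i A)

/-- A vertex cover of a clutter: a set of vertices meeting every edge. -/
def IsVertexCover (B : Finset (Fin s)) : Prop := ∀ e ∈ C.edges, ∃ i ∈ e, i ∈ B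

/-- A minimal vertex cover: a vertex cover minimal with respect to inclusion. -/
def IsMinimalVertexCover (B : Finset (Fin s)) : Prop :=
  C.IsVertexCover B ∧ ∀ B' ⊂ B, ¬ C.IsVertexCover B'

/-- The independence number `β₀(C)`: the maximum size of a stable set. -/
noncomputable def indepNum : ℕ := sSup {n : ℕ | ∃ A : Finset (Fin s), C.Stable A ∧ A.card = n}

/-- The independent domination number `i(C)`: the minimum size of a maximal stable set. -/
noncomputable def idomNum : ℕ :=
  sInf {n : ℕ | ∃ A : Finset (Fin s), C.MaximalStable A ∧ A.card = n}

/-- The vertex covering number `α₀(C)`: the minimum size of a vertex cover. -/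
noncomputable def coverNum : ℕ :=
  sInf {n : ℕ | ∃ B : Finset (Fin s), C.IsVertexCover B ∧ B.card = n}

/-- The ideal of covers of a clutter, generated by the monomials of the minimal vertex covers. -/
noncomputable def coverIdeal (K : Type*) [Field K] : Ideal (MvPolynomial (Fin s) K) :=
  Ideal.span ((fun B : Finset (Fin s) => ∏ i ∈ B, X i) '' {B | C.IsMinimalVertexCover B})

/-- The clutter is well-covered if every maximal stable set has maximum cardinality `β₀(C)`. -/
def WellCovered : Prop := ∀ A : Finset (Fin s), C.MaximalStable A → A.card = C.indepNum

/-- Deletion of an edge from a clutter. -/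
def deleteEdge (e : Finset (Fin s)) : Clutter s :=
  ⟨C.edges.erase e, fun a ha b hb hab =>
    C.antichain a (Finset.mem_of_mem_erase ha) b (Finset.mem_of_mem_erase hb) hab⟩

/-- An edge-critical clutter: deleting any edge increases the independence number. -/
def EdgeCritical : Prop := ∀ e ∈ C.edges, C.indepNum < (C.deleteEdge e).indepNum

end Clutter

section Graphs

variable {V : Type*}

/-- The edge ideal of a simple graph. -/
noncomputable def gEdgeIdeal (K : Type*) [Field K] (G : SimpleGraph V) :
    Ideal (MvPolynomial V K) :=
  Ideal.span {m : MvPolynomial V K | ∃ i j : V, G.Adj i j ∧ m = X i * X j}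

/-- A stable (independent) set of vertices of a graph. -/
def gStable (G : SimpleGraph V) (A : Finset V) : Prop := ∀ i ∈ A, ∀ j ∈ A, ¬ G.Adj i j

/-- A maximal stable set of a graph. -/
def gMaximalStable (G : SimpleGraph V) (A : Finset V) : Prop :=
  gStable G A ∧ ∀ B : Finset V, gStable G B → A ⊆ B → A = B

/-- The independence number `β₀(G)`. -/
noncomputable def gIndepNum [Fintype V] (G : SimpleGraph V) : ℕ :=
  sSup {n : ℕ | ∃ A : Finset V, gStable G A ∧ A.card = n}

/-- A maximum stable set: a stable set of maximum cardinality `β₀(G)`. -/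
def gMaximumStable [Fintype V] (G : SimpleGraph V) (A : Finset V) : Prop :=
  gStable G A ∧ A.card = gIndepNum G

/-- The independent domination number `i(G)`: minimum size of a maximal stable set. -/
noncomputable def gIdomNum (G : SimpleGraph V) : ℕ :=
  sInf {n : ℕ | ∃ A : Finset V, gMaximalStable G A ∧ A.card = n}

/-- A well-covered graph: every maximal stable set is a maximum stable set. -/
def gWellCovered [Fintype V] (G : SimpleGraph V) : Prop :=
  ∀ A : Finset V, gMaximalStable G A → A.card = gIndepNum G

/-- The class `W₂`: graphs with at least two vertices in which any two disjoint stable sets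
are contained in two disjoint maximum stable sets. -/
def W2 [Fintype V] (G : SimpleGraph V) : Prop :=
  2 ≤ Fintype.card V ∧ ∀ A B : Finset V, gStable G A → gStable G B → Disjoint A B →
    ∃ A' B' : Finset V, gMaximumStable G A' ∧ gMaximumStable G B' ∧ Disjoint A' B' ∧
      A ⊆ A' ∧ B ⊆ B'

/-- The neighbor set of a set of vertices of a graph: all vertices adjacent to a vertex of `A`. -/
noncomputable def gNeighborSet [Fintype V] (G : SimpleGraph V) (A : Finset V) : Finset V :=
  Finset.univ.filter (fun i => ∃ j ∈ A, G.Adj i j)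

/-- A vertex cover of a graph. -/
def gIsVertexCover (G : SimpleGraph V) (B : Finset V) : Prop :=
  ∀ i j : V, G.Adj i j → i ∈ B ∨ j ∈ B

/-- A minimal vertex cover of a graph. -/
def gIsMinimalVertexCover (G : SimpleGraph V) (B : Finset V) : Prop :=
  gIsVertexCover G B ∧ ∀ B' ⊂ B, ¬ gIsVertexCover G B'

/-- An edge-critical graph: deleting any edge increases the independence number. -/
def gEdgeCritical [Fintype V] (G : SimpleGraph V) : Prop :=
  ∀ i j : V, G.Adj i j → gIndepNum G < gIndepNum (G.deleteEdges {s(i, j)})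

end Graphs
section Aux

open Finsupp

variable {K : Type*} [Field K] {s : ℕ}

/-- The squarefree exponent vector of a finset of variables. -/
noncomputable def sqExp (A : Finset (Fin s)) : (Fin s) →₀ ℕ := ∑ i ∈ A, Finsupp.single i 1

lemma sqExp_apply (A : Finset (Fin s)) (j : Fin s) :
    sqExp A j = if j ∈ A then 1 else 0 := by
  classical
  rw [sqExp, Finset.sum_apply']
  simp [Finsupp.single_apply]

lemma sqExp_support (A : Finset (Fin s)) : (sqExp A).support = A := by
  ext j; simp [Finsupp.mem_support_iff, sqExp_apply]

lemma sqExp_degree (A : Finset (Fin s)) : (sqExp A).degree = A.card := by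
  rw [Finsupp.degree_apply, sqExp_support]
  rw [Finset.card_eq_sum_ones]
  refine Finset.sum_congr rfl fun i hi => ?_
  simp [sqExp_apply, hi]

lemma prod_X_eq_monomial (A : Finset (Fin s)) :
    (∏ i ∈ A, (X i : MvPolynomial (Fin s) K)) = monomial (sqExp A) 1 := by
  classical
  induction A using Finset.induction_on with
  | empty => simp [sqExp]
  | @insert a A ha ih =>
      rw [Finset.prod_insert ha, ih,
        show sqExp (insert a A) = Finsupp.single a 1 + sqExp A by
          rw [sqExp, sqExp, Finset.sum_insert ha]]
      rw [← pow_one (X a : MvPolynomial (Fin s) K), X_pow_eq_monomial, monomial_mul, one_mul]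

lemma X_mul_monomial_one (i : Fin s) (d : (Fin s) →₀ ℕ) :
    (X i : MvPolynomial (Fin s) K) * monomial d 1
      = monomial (Finsupp.single i 1 + d) 1 := by
  rw [← pow_one (X i : MvPolynomial (Fin s) K), X_pow_eq_monomial, monomial_mul, one_mul]

lemma support_single_add (i : Fin s) (d : (Fin s) →₀ ℕ) :
    (Finsupp.single i 1 + d).support = insert i d.support := by
  ext j
  simp only [Finsupp.mem_support_iff, Finsupp.add_apply, Finsupp.single_apply,
    Finset.mem_insert]
  rcases eq_or_ne j i with rfl | hne
  · simp
  · simp [Ne.symm hne, hne]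

/-- The prime ideal generated by the variables in `B`. -/
noncomputable def pB (B : Finset (Fin s)) (K : Type*) [Field K] :
    Ideal (MvPolynomial (Fin s) K) :=
  Ideal.span ((X : Fin s → MvPolynomial (Fin s) K) '' (B : Set (Fin s)))

lemma mem_pB {B : Finset (Fin s)} {g : MvPolynomial (Fin s) K} :
    g ∈ pB B K ↔ ∀ m ∈ g.support, ∃ i ∈ B, m i ≠ 0 := by
  rw [pB, MvPolynomial.mem_ideal_span_X_image]
  simp

lemma X_mem_pB {B : Finset (Fin s)} {i : Fin s} :
    (X i : MvPolynomial (Fin s) K) ∈ pB B K ↔ i ∈ B := by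
  rw [mem_pB]
  constructor
  · intro h
    obtain ⟨j, hj, hne⟩ := h (Finsupp.single i 1) (by simp [MvPolynomial.support_X])
    rw [Finsupp.single_apply] at hne
    rcases eq_or_ne i j with rfl | hij
    · exact hj
    · simp [hij] at hne
  · intro h m hm
    rw [MvPolynomial.support_X, Finset.mem_singleton] at hm
    subst hm
    exact ⟨i, h, by simp⟩

lemma sub_kill_mem (B : Finset (Fin s)) (g : MvPolynomial (Fin s) K) :
    g - MvPolynomial.aeval (fun i => if i ∈ B then 0 else X i) g ∈ pB B K := by
  classical
  induction g using MvPolynomial.induction_on with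
  | C a => simp
  | add p q hp hq =>
      have : p + q - (MvPolynomial.aeval fun i => if i ∈ B then 0 else X i) (p + q)
          = (p - (MvPolynomial.aeval fun i => if i ∈ B then 0 else X i) p)
            + (q - (MvPolynomial.aeval fun i => if i ∈ B then 0 else X i) q) := by
        rw [map_add]; ring
      rw [this]; exact Ideal.add_mem _ hp hq
  | mul_X p i hp =>
      have heq : p * X i - (MvPolynomial.aeval fun i => if i ∈ B then 0 else X i) (p * X i)
          = (p - (MvPolynomial.aeval fun i => if i ∈ B then 0 else X i) p) * X i
            + ((MvPolynomial.aeval fun i => if i ∈ B then 0 else X i) p)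
              * (X i - (MvPolynomial.aeval fun i => if i ∈ B then 0 else X i) (X i : MvPolynomial (Fin s) K)) := by
        rw [map_mul]; ring
      rw [heq]
      refine Ideal.add_mem _ (Ideal.mul_mem_right _ _ hp) (Ideal.mul_mem_left _ _ ?_)
      rw [MvPolynomial.aeval_X]
      by_cases hi : i ∈ B
      · simp only [hi, if_true, sub_zero]
        exact Ideal.subset_span ⟨i, hi, rfl⟩
      · simp [hi]

lemma pB_prime (B : Finset (Fin s)) : (pB B K).IsPrime := by
  have hker : pB B K = RingHom.ker
      ((MvPolynomial.aeval (fun i => if i ∈ B then 0 else X i)).toRingHom :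
        MvPolynomial (Fin s) K →+* MvPolynomial (Fin s) K) := by
    apply le_antisymm
    · rw [pB, Ideal.span_le]
      rintro _ ⟨i, hi, rfl⟩
      rw [Finset.mem_coe] at hi
      simp [RingHom.mem_ker, hi]
    · intro g hg
      have hg' : (MvPolynomial.aeval (fun i => if i ∈ B then 0 else X i)) g = 0 := hg
      have := sub_kill_mem B g
      rwa [hg', sub_zero] at this
  rw [hker]
  exact RingHom.ker_isPrime _

end Aux
section Aux2

variable {K : Type*} [Field K] {s : ℕ}

lemma edgeIdeal_eq_span_monomial (C : Clutter s) :
    C.edgeIdeal K = Ideal.span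
      ((fun d => monomial d (1 : K)) '' (sqExp '' (C.edges : Set (Finset (Fin s))))) := by
  rw [Clutter.edgeIdeal, Set.image_image]
  congr 1
  exact Set.image_congr fun e _ => prod_X_eq_monomial e

lemma mem_edgeIdeal {C : Clutter s} {g : MvPolynomial (Fin s) K} :
    g ∈ C.edgeIdeal K ↔ ∀ m ∈ g.support, ∃ e ∈ C.edges, ∀ i ∈ e, m i ≠ 0 := by
  rw [edgeIdeal_eq_span_monomial, MvPolynomial.mem_ideal_span_monomial_image]
  apply forall₂_congr; intro m hm
  constructor
  · rintro ⟨d, ⟨e, he, rfl⟩, hle⟩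
    rw [Finset.mem_coe] at he
    refine ⟨e, he, fun i hi => ?_⟩
    have h1 := (Finsupp.le_iff _ _).mp hle i (by rw [sqExp_support]; exact hi)
    rw [sqExp_apply, if_pos hi] at h1
    omega
  · rintro ⟨e, he, h⟩
    refine ⟨sqExp e, ⟨e, he, rfl⟩, (Finsupp.le_iff _ _).mpr fun i hi => ?_⟩
    rw [sqExp_support] at hi
    rw [sqExp_apply, if_pos hi]
    have := h i hi
    omega

lemma monomial_mem_edgeIdeal {C : Clutter s} {d : (Fin s) →₀ ℕ} :
    monomial d (1 : K) ∈ C.edgeIdeal K ↔ ∃ e ∈ C.edges, ∀ i ∈ e, d i ≠ 0 := by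
  rw [mem_edgeIdeal]
  simp [MvPolynomial.support_monomial]

lemma edgeIdeal_le_pB {C : Clutter s} {B : Finset (Fin s)} (hB : C.IsVertexCover B) :
    C.edgeIdeal K ≤ pB B K := by
  intro g hg
  rw [mem_pB]; intro m hm
  obtain ⟨e, he, hs⟩ := mem_edgeIdeal.mp hg m hm
  obtain ⟨i, hie, hiB⟩ := hB e he
  exact ⟨i, hiB, hs i hie⟩

/-- The finset of minimal vertex covers. -/
noncomputable def MCs (C : Clutter s) : Finset (Finset (Fin s)) :=
  Finset.univ.filter (fun B => C.IsMinimalVertexCover B)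

lemma exists_minimal_cover {C : Clutter s} :
    ∀ (n : ℕ) (B : Finset (Fin s)), B.card ≤ n → C.IsVertexCover B →
      ∃ B' ⊆ B, C.IsMinimalVertexCover B' := by
  intro n
  induction n with
  | zero =>
      intro B hB hcov
      refine ⟨B, subset_rfl, hcov, fun B' hB' => absurd hB' ?_⟩
      have hB0 : B = ∅ := Finset.card_eq_zero.mp (Nat.le_zero.mp hB)
      simp [hB0]
  | succ n ih =>
      intro B hB hcov
      by_cases h : C.IsMinimalVertexCover B
      · exact ⟨B, subset_rfl, h⟩
      · have hex : ∃ B', B' ⊂ B ∧ C.IsVertexCover B' := by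
          by_contra hno
          push_neg at hno
          exact h ⟨hcov, fun B' hB' => hno B' hB'⟩
        obtain ⟨B', hB'B, hB'cov⟩ := hex
        obtain ⟨B'', h1, h2⟩ := ih B' (by have := Finset.card_lt_card hB'B; omega) hB'cov
        exact ⟨B'', h1.trans hB'B.subset, h2⟩

lemma edgeIdeal_eq_inf (C : Clutter s) :
    C.edgeIdeal K = (MCs C).inf (fun B => pB B K) := by
  apply le_antisymm
  · exact Finset.le_inf fun B hB => edgeIdeal_le_pB ((Finset.mem_filter.mp hB).2).1
  · intro g hg
    rw [mem_edgeIdeal]; intro m hm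
    by_contra hno; push_neg at hno
    have hcov : C.IsVertexCover (Finset.univ.filter fun i => m i = 0) := by
      intro e he
      obtain ⟨i, hie, hi0⟩ := hno e he
      exact ⟨i, hie, Finset.mem_filter.mpr ⟨Finset.mem_univ i, hi0⟩⟩
    obtain ⟨B', hB'sub, hB'min⟩ := exists_minimal_cover _ _ le_rfl hcov
    have hgB' : g ∈ pB B' K := (Submodule.mem_finsetInf.mp hg) B'
      (Finset.mem_filter.mpr ⟨Finset.mem_univ _, hB'min⟩)
    obtain ⟨i, hiB', hine⟩ := mem_pB.mp hgB' m hm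
    exact hine (Finset.mem_filter.mp (hB'sub hiB')).2

lemma mem_neighborSet {C : Clutter s} {A : Finset (Fin s)} {i : Fin s} :
    i ∈ C.neighborSet A ↔ ∃ e ∈ C.edges, e ⊆ insert i A := by
  simp [Clutter.neighborSet]

lemma neighborSet_disjoint {C : Clutter s} {A : Finset (Fin s)} (hA : C.Stable A)
    {i : Fin s} (hi : i ∈ C.neighborSet A) : i ∉ A := by
  intro hiA
  obtain ⟨e, he, hs⟩ := mem_neighborSet.mp hi
  exact hA e he (by rwa [Finset.insert_eq_self.mpr hiA] at hs)

lemma colon_sqExp {C : Clutter s} {A : Finset (Fin s)} (hA : C.Stable A)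
    (hc : C.IsVertexCover (C.neighborSet A)) :
    Submodule.colon (C.edgeIdeal K) (Ideal.span {monomial (sqExp A) (1 : K)})
      = pB (C.neighborSet A) K := by
  apply le_antisymm
  · intro g hg
    have hg' := Ideal.mem_colon_span_singleton.mp hg
    rw [mem_pB]; intro m hm
    have hco : MvPolynomial.coeff (m + sqExp A) (g * monomial (sqExp A) (1 : K))
        = MvPolynomial.coeff m g := by
      rw [MvPolynomial.coeff_mul_monomial, mul_one]
    have hmem : m + sqExp A ∈ (g * monomial (sqExp A) (1 : K)).support := by
      rw [MvPolynomial.mem_support_iff, hco]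
      exact MvPolynomial.mem_support_iff.mp hm
    obtain ⟨e, he, hs⟩ := mem_edgeIdeal.mp hg' _ hmem
    obtain ⟨i, hie, hiN⟩ := hc e he
    refine ⟨i, hiN, fun h0 => ?_⟩
    have hadd := hs i hie
    rw [Finsupp.add_apply, h0, zero_add, sqExp_apply] at hadd
    have hiA : i ∈ A := by by_contra hiA; simp [hiA] at hadd
    exact neighborSet_disjoint hA hiN hiA
  · rw [pB, Ideal.span_le]
    rintro _ ⟨i, hi, rfl⟩
    rw [Finset.mem_coe] at hi
    rw [SetLike.mem_coe, Ideal.mem_colon_span_singleton, X_mul_monomial_one]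
    obtain ⟨e, he, hs⟩ := mem_neighborSet.mp hi
    rw [monomial_mem_edgeIdeal]
    refine ⟨e, he, fun j hj => ?_⟩
    rcases Finset.mem_insert.mp (hs hj) with rfl | hjA
    · simp [Finsupp.add_apply]
    · simp [Finsupp.add_apply, sqExp_apply, hjA]

lemma mem_associatedPrimes_of_colon {I p : Ideal (MvPolynomial (Fin s) K)}
    {f : MvPolynomial (Fin s) K} (hp : p.IsPrime)
    (h : Submodule.colon I (Ideal.span {f}) = p) :
    p ∈ associatedPrimes (MvPolynomial (Fin s) K) (MvPolynomial (Fin s) K ⧸ I) := by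
  refine isAssociatedPrime_iff.mpr ⟨hp, Submodule.Quotient.mk f, ?_⟩
  ext r
  rw [Submodule.mem_colon_singleton, Submodule.mem_bot, ← Submodule.Quotient.mk_smul,
    Submodule.Quotient.mk_eq_zero, smul_eq_mul, ← h, Ideal.mem_colon_span_singleton]

end Aux2
section Aux3

variable {K : Type*} [Field K] {s : ℕ}

lemma exists_A_of_colon {C : Clutter s} {f : MvPolynomial (Fin s) K}
    {p : Ideal (MvPolynomial (Fin s) K)} (hp : p.IsPrime)
    (hcol : Submodule.colon (C.edgeIdeal K) (Ideal.span {f}) = p) :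
    ∃ a ∈ f.support, C.Stable a.support ∧
      C.IsMinimalVertexCover (C.neighborSet a.support) := by
  classical
  have hfI : f ∉ C.edgeIdeal K := by
    intro h
    exact hp.ne_top (hcol ▸ (Ideal.eq_top_iff_one _).mpr
      (Ideal.mem_colon_span_singleton.mpr (by rwa [one_mul])))
  obtain ⟨B₀, hB₀mem, hfB₀⟩ : ∃ B₀ ∈ MCs C, f ∉ pB B₀ K := by
    by_contra hno; push_neg at hno
    exact hfI ((edgeIdeal_eq_inf (K := K) C) ▸ Submodule.mem_finsetInf.mpr hno)
  have hB₀min : C.IsMinimalVertexCover B₀ := (Finset.mem_filter.mp hB₀mem).2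
  have hIp : C.edgeIdeal K ≤ p := by
    rw [← hcol]; intro r hr
    exact Ideal.mem_colon_span_singleton.mpr (Ideal.mul_mem_right f _ hr)
  have hpB₀ : p ≤ pB B₀ K := by
    intro r hr
    rw [← hcol] at hr
    have hrf : r * f ∈ C.edgeIdeal K := Ideal.mem_colon_span_singleton.mp hr
    have hrf2 := edgeIdeal_le_pB (K := K) hB₀min.1 hrf
    exact ((pB_prime B₀).mem_or_mem hrf2).resolve_right hfB₀
  obtain ⟨B₁, hB₁mem, hB₁le⟩ := hp.inf_le'.mp ((edgeIdeal_eq_inf (K := K) C) ▸ hIp)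
  have hB₁sub : B₁ ⊆ B₀ := fun i hi =>
    X_mem_pB.mp (hpB₀ (hB₁le (Ideal.subset_span ⟨i, hi, rfl⟩)))
  have hB₁eq : B₁ = B₀ := by
    by_contra hne
    exact hB₀min.2 B₁ (Finset.ssubset_iff_subset_ne.mpr ⟨hB₁sub, hne⟩)
      ((Finset.mem_filter.mp hB₁mem).2).1
  have hpeq : p = pB B₀ K := le_antisymm hpB₀ (hB₁eq ▸ hB₁le)
  have hup : ∀ a ∈ f.support, pB B₀ K ≤
      Submodule.colon (C.edgeIdeal K) (Ideal.span {monomial a (1 : K)}) := by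
    intro a ha
    rw [pB, Ideal.span_le]
    rintro _ ⟨i, hi, rfl⟩
    rw [Finset.mem_coe] at hi
    rw [SetLike.mem_coe, Ideal.mem_colon_span_singleton, X_mul_monomial_one]
    have hXp : (X i : MvPolynomial (Fin s) K) ∈ p := hpeq ▸ X_mem_pB.mpr hi
    rw [← hcol] at hXp
    have hXf : (X i : MvPolynomial (Fin s) K) * f ∈ C.edgeIdeal K :=
      Ideal.mem_colon_span_singleton.mp hXp
    have hmem : Finsupp.single i 1 + a ∈ ((X i : MvPolynomial (Fin s) K) * f).support := by
      rw [MvPolynomial.mem_support_iff, MvPolynomial.coeff_X_mul]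
      exact MvPolynomial.mem_support_iff.mp ha
    obtain ⟨e, he, hs⟩ := mem_edgeIdeal.mp hXf _ hmem
    exact monomial_mem_edgeIdeal.mpr ⟨e, he, hs⟩
  obtain ⟨a, ha, hdown⟩ : ∃ a ∈ f.support,
      Submodule.colon (C.edgeIdeal K) (Ideal.span {monomial a (1 : K)}) ≤ pB B₀ K := by
    by_contra hcon; push_neg at hcon
    have hch2 : ∀ a ∈ f.support, ∃ m : (Fin s) →₀ ℕ,
        (∀ i ∈ B₀, m i = 0) ∧ monomial (m + a) (1 : K) ∈ C.edgeIdeal K := by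
      intro a ha
      obtain ⟨g, hg1, hg2⟩ := SetLike.not_le_iff_exists.mp (hcon a ha)
      rw [mem_pB] at hg2; push_neg at hg2
      obtain ⟨m, hm, hmB⟩ := hg2
      refine ⟨m, hmB, ?_⟩
      have hgf : g * monomial a (1 : K) ∈ C.edgeIdeal K := Ideal.mem_colon_span_singleton.mp hg1
      have hmem : m + a ∈ (g * monomial a (1 : K)).support := by
        rw [MvPolynomial.mem_support_iff, MvPolynomial.coeff_mul_monomial, mul_one]
        exact MvPolynomial.mem_support_iff.mp hm
      obtain ⟨e, he, hs⟩ := mem_edgeIdeal.mp hgf _ hmem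
      exact monomial_mem_edgeIdeal.mpr ⟨e, he, hs⟩
    choose m hmB hmI using hch2
    set c : (Fin s) →₀ ℕ := ∑ x ∈ f.support.attach, m x.1 x.2 with hc
    have hcapp : ∀ i, c i = ∑ x ∈ f.support.attach, m x.1 x.2 i := by
      intro i; rw [hc, Finset.sum_apply']
    have hcf : monomial c (1 : K) * f ∈ C.edgeIdeal K := by
      rw [mem_edgeIdeal]
      intro b hb
      have hb' := MvPolynomial.support_mul _ _ hb
      rw [MvPolynomial.support_monomial, if_neg (one_ne_zero (α := K))] at hb'
      obtain ⟨y, hy, z, hz, hyz⟩ := Finset.mem_add.mp hb'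
      rw [Finset.mem_singleton] at hy
      subst hy
      obtain ⟨e, he, hs⟩ := monomial_mem_edgeIdeal.mp (hmI z hz)
      refine ⟨e, he, fun i hi => ?_⟩
      have h1 := hs i hi
      rw [Finsupp.add_apply] at h1
      have hle : m z hz i ≤ c i := by
        rw [hcapp]
        exact Finset.single_le_sum (f := fun x : {x // x ∈ f.support} => m x.1 x.2 i)
          (fun _ _ => Nat.zero_le _) (Finset.mem_attach _ ⟨z, hz⟩)
      rw [← hyz, Finsupp.add_apply]
      omega
    have hcp : monomial c (1 : K) ∈ pB B₀ K := by
      rw [← hpeq, ← hcol]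
      exact Ideal.mem_colon_span_singleton.mpr hcf
    rw [mem_pB] at hcp
    obtain ⟨i, hiB, hine⟩ := hcp c
      (by rw [MvPolynomial.support_monomial, if_neg (one_ne_zero (α := K))]
          exact Finset.mem_singleton_self c)
    apply hine
    rw [hcapp]
    exact Finset.sum_eq_zero fun x _ => hmB x.1 x.2 i hiB
  have hcoleq : Submodule.colon (C.edgeIdeal K) (Ideal.span {monomial a (1 : K)})
      = pB B₀ K := le_antisymm hdown (hup a ha)
  refine ⟨a, ha, ?_, ?_⟩
  · intro e he hsub
    have hmono : monomial a (1 : K) ∈ C.edgeIdeal K :=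
      monomial_mem_edgeIdeal.mpr ⟨e, he, fun i hi => Finsupp.mem_support_iff.mp (hsub hi)⟩
    have h1 : (1 : MvPolynomial (Fin s) K) ∈ pB B₀ K := by
      rw [← hcoleq]
      exact Ideal.mem_colon_span_singleton.mpr (by rwa [one_mul])
    exact (pB_prime (K := K) B₀).ne_top ((Ideal.eq_top_iff_one _).mpr h1)
  · have hNeq : C.neighborSet a.support = B₀ := by
      ext i
      rw [mem_neighborSet]
      constructor
      · rintro ⟨e, he, hs⟩
        have hmono : monomial (Finsupp.single i 1 + a) (1 : K) ∈ C.edgeIdeal K := by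
          rw [monomial_mem_edgeIdeal]
          refine ⟨e, he, fun j hj => ?_⟩
          rcases Finset.mem_insert.mp (hs hj) with rfl | hjA
          · simp [Finsupp.add_apply]
          · have hja := Finsupp.mem_support_iff.mp hjA
            simp [Finsupp.add_apply, hja]
        have hXi : (X i : MvPolynomial (Fin s) K) ∈ pB B₀ K := by
          rw [← hcoleq]
          exact Ideal.mem_colon_span_singleton.mpr (by rwa [X_mul_monomial_one])
        exact X_mem_pB.mp hXi
      · intro hiB
        have hXcol := hup a ha (X_mem_pB.mpr hiB)
        have hXm := Ideal.mem_colon_span_singleton.mp hXcol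
        rw [X_mul_monomial_one] at hXm
        obtain ⟨e, he, hs⟩ := monomial_mem_edgeIdeal.mp hXm
        refine ⟨e, he, fun j hj => ?_⟩
        have h2 := hs j hj
        rw [Finsupp.add_apply, Finsupp.single_apply] at h2
        rcases eq_or_ne i j with rfl | hij
        · exact Finset.mem_insert_self _ _
        · refine Finset.mem_insert_of_mem (Finsupp.mem_support_iff.mpr ?_)
          simpa [hij] using h2
    rw [hNeq]; exact hB₀min

lemma maximalStable_minCover {C : Clutter s} {A : Finset (Fin s)} (hA : C.MaximalStable A) :
    C.IsMinimalVertexCover (C.neighborSet A) := by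
  have hsub : ∀ i, i ∉ A → i ∈ C.neighborSet A := by
    intro i hi
    by_contra hN
    have hst : C.Stable (insert i A) := fun e he hsub' => hN (mem_neighborSet.mpr ⟨e, he, hsub'⟩)
    have h2 := hA.2 _ hst (Finset.subset_insert i A)
    exact hi (h2 ▸ Finset.mem_insert_self i A)
  constructor
  · intro e he
    obtain ⟨i, hie, hiA⟩ := Finset.not_subset.mp (hA.1 e he)
    exact ⟨i, hie, hsub i hiA⟩
  · intro B' hB' hcov
    obtain ⟨j, hjN, hjB'⟩ := Finset.exists_of_ssubset hB'
    obtain ⟨e, he, hes⟩ := mem_neighborSet.mp hjN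
    obtain ⟨k, hke, hkB'⟩ := hcov e he
    have hkN : k ∈ C.neighborSet A := hB'.subset hkB'
    have hkA : k ∉ A := neighborSet_disjoint hA.1 hkN
    rcases Finset.mem_insert.mp (hes hke) with rfl | h
    · exact hjB' hkB'
    · exact hkA h

lemma empty_not_good {C : Clutter s} (hI : ¬ (C.edgeIdeal K).IsPrime)
    (hst : C.Stable (∅ : Finset (Fin s)))
    (hmin : C.IsMinimalVertexCover (C.neighborSet (∅ : Finset (Fin s)))) : False := by
  apply hI
  have hememp : (∅ : Finset (Fin s)) ∉ C.edges := fun h => hst ∅ h subset_rfl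
  have hsingleton : ∀ e' ∈ C.edges, ∀ i : Fin s, e' ⊆ insert i (∅ : Finset (Fin s)) →
      e' = {i} := by
    intro e' he' i hs'
    rcases Finset.subset_singleton_iff.mp (by simpa using hs') with rfl | h
    · exact absurd he' hememp
    · exact h
  have hsing : ∀ e ∈ C.edges, ∃ i, e = {i} ∧ i ∈ C.neighborSet (∅ : Finset (Fin s)) := by
    intro e he
    obtain ⟨i, hie, hiN⟩ := hmin.1 e he
    obtain ⟨e', he', hs'⟩ := mem_neighborSet.mp hiN
    have he'i : e' = {i} := hsingleton e' he' i hs'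
    have heq : e = {i} := (C.antichain {i} (he'i ▸ he') e he
      (Finset.singleton_subset_iff.mpr hie)).symm
    exact ⟨i, heq, hiN⟩
  have heq : C.edgeIdeal K = pB (C.neighborSet (∅ : Finset (Fin s))) K := by
    apply le_antisymm
    · rw [Clutter.edgeIdeal, Ideal.span_le]
      rintro _ ⟨e, he, rfl⟩
      rw [Finset.mem_coe] at he
      obtain ⟨i, rfl, hiN⟩ := hsing e he
      simp only [Finset.prod_singleton]
      exact Ideal.subset_span ⟨i, hiN, rfl⟩
    · rw [pB, Ideal.span_le]
      rintro _ ⟨i, hi, rfl⟩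
      rw [Finset.mem_coe] at hi
      obtain ⟨e', he', hs'⟩ := mem_neighborSet.mp hi
      have he'i : e' = {i} := hsingleton e' he' i hs'
      have hXi : (X i : MvPolynomial (Fin s) K) = ∏ j ∈ ({i} : Finset (Fin s)), X j := by simp
      rw [SetLike.mem_coe, Clutter.edgeIdeal, hXi]
      exact Ideal.subset_span ⟨{i}, by rw [Finset.mem_coe, ← he'i]; exact he', rfl⟩
  rw [heq]; exact pB_prime _

end Aux3
/-- For the edge ideal `I = I(C)` of a clutter `C`, `I` not prime:
every maximal stable set lies in `𝒜_C`, and `v(I)` is the minimum cardinality of a member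
of `𝒜_C` (the stable sets whose neighbor set is a minimal vertex cover). -/
theorem vNumber_edgeIdeal_clutter {K : Type*} [Field K] {s : ℕ}
    (C : Clutter s) (hI : ¬ (C.edgeIdeal K).IsPrime) :
    (∀ A : Finset (Fin s), C.MaximalStable A →
      C.Stable A ∧ C.IsMinimalVertexCover (C.neighborSet A)) ∧
    vNumber (C.edgeIdeal K) = sInf {n : ℕ | ∃ A : Finset (Fin s),
      (C.Stable A ∧ C.IsMinimalVertexCover (C.neighborSet A)) ∧ A.card = n} := by
  classical
  refine ⟨fun A hA => ⟨hA.1, maximalStable_minCover hA⟩, ?_⟩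
  have hne : C.edgeIdeal K ≠ Ideal.span
      (Set.range (X : Fin s → MvPolynomial (Fin s) K)) := by
    intro h
    apply hI
    rw [h]
    have hspan : Ideal.span (Set.range (X : Fin s → MvPolynomial (Fin s) K))
        = pB (Finset.univ : Finset (Fin s)) K := by
      rw [pB]; congr 1
      rw [Finset.coe_univ, Set.image_univ]
    rw [hspan]; exact pB_prime _
  unfold vNumber
  rw [if_neg hne]
  have hAD : ∀ n, (∃ A : Finset (Fin s),
      (C.Stable A ∧ C.IsMinimalVertexCover (C.neighborSet A)) ∧ A.card = n) →
      (1 ≤ n ∧ ∃ f : MvPolynomial (Fin s) K, f.IsHomogeneous n ∧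
        ∃ p ∈ associatedPrimes (MvPolynomial (Fin s) K)
          (MvPolynomial (Fin s) K ⧸ C.edgeIdeal K),
          Submodule.colon (C.edgeIdeal K) (Ideal.span {f}) = p) := by
    rintro _ ⟨A, ⟨hst, hmin⟩, rfl⟩
    have hA1 : 1 ≤ A.card := by
      rcases Finset.eq_empty_or_nonempty A with rfl | hA
      · exact (empty_not_good hI hst hmin).elim
      · exact hA.card_pos
    exact ⟨hA1, monomial (sqExp A) 1,
      MvPolynomial.isHomogeneous_monomial _ (sqExp_degree A),
      pB (C.neighborSet A) K,
      mem_associatedPrimes_of_colon (pB_prime _) (colon_sqExp hst hmin.1),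
      colon_sqExp hst hmin.1⟩
  have hDA : ∀ d, (1 ≤ d ∧ ∃ f : MvPolynomial (Fin s) K, f.IsHomogeneous d ∧
      ∃ p ∈ associatedPrimes (MvPolynomial (Fin s) K)
        (MvPolynomial (Fin s) K ⧸ C.edgeIdeal K),
        Submodule.colon (C.edgeIdeal K) (Ideal.span {f}) = p) →
      ∃ n, (∃ A : Finset (Fin s),
        (C.Stable A ∧ C.IsMinimalVertexCover (C.neighborSet A)) ∧ A.card = n) ∧ n ≤ d := by
    rintro d ⟨hd1, f, hf, p, hpAss, hcol⟩
    obtain ⟨a, ha, hstab, hmin⟩ := exists_A_of_colon hpAss.isPrime hcol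
    refine ⟨a.support.card, ⟨a.support, ⟨hstab, hmin⟩, rfl⟩, ?_⟩
    have hdeg : a.degree = d := by
      have hw := hf (MvPolynomial.mem_support_iff.mp ha)
      rw [Finsupp.degree_eq_weight_one]
      exact hw
    calc a.support.card = ∑ _i ∈ a.support, 1 := by rw [Finset.card_eq_sum_ones]
      _ ≤ ∑ i ∈ a.support, a i :=
          Finset.sum_le_sum fun i hi => Nat.one_le_iff_ne_zero.mpr (Finsupp.mem_support_iff.mp hi)
      _ = a.degree := rfl
      _ = d := hdeg
  by_cases hA : {n : ℕ | ∃ A : Finset (Fin s),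
      (C.Stable A ∧ C.IsMinimalVertexCover (C.neighborSet A)) ∧ A.card = n}.Nonempty
  · apply le_antisymm
    · exact Nat.sInf_le (hAD _ (Nat.sInf_mem hA))
    · have hDne : {d : ℕ | 1 ≤ d ∧ ∃ f : MvPolynomial (Fin s) K, f.IsHomogeneous d ∧
          ∃ p ∈ associatedPrimes (MvPolynomial (Fin s) K)
            (MvPolynomial (Fin s) K ⧸ C.edgeIdeal K),
            Submodule.colon (C.edgeIdeal K) (Ideal.span {f}) = p}.Nonempty :=
        ⟨_, hAD _ (Nat.sInf_mem hA)⟩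
      obtain ⟨n, hn, hle⟩ := hDA _ (Nat.sInf_mem hDne)
      exact (Nat.sInf_le hn).trans hle
  · have hAe : {n : ℕ | ∃ A : Finset (Fin s),
        (C.Stable A ∧ C.IsMinimalVertexCover (C.neighborSet A)) ∧ A.card = n} = ∅ :=
      Set.not_nonempty_iff_eq_empty.mp hA
    have hDe : {d : ℕ | 1 ≤ d ∧ ∃ f : MvPolynomial (Fin s) K, f.IsHomogeneous d ∧
        ∃ p ∈ associatedPrimes (MvPolynomial (Fin s) K)
          (MvPolynomial (Fin s) K ⧸ C.edgeIdeal K),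
          Submodule.colon (C.edgeIdeal K) (Ideal.span {f}) = p} = ∅ := by
      rw [Set.eq_empty_iff_forall_notMem]
      intro d hd
      obtain ⟨n, hn, _⟩ := hDA d hd
      exact hA ⟨n, hn⟩
    rw [hAe, hDe]
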